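/- (Lemma 3.1, backward problem.) Let N ≥ 1, 1 ≤ L ≤ M, let μ_1, ..., μ_L be pairwise distinct positive real numbers, let T > 0, and let 0 < t_1 < t_2 < ... < t_M. Let Φ be a real N × L matrix with linearly independent columns, let F = diag(f_1, ..., f_L) with every f_i ≠ 0, let D = diag(d_1, ..., d_L) with d_i = exp(−μ_i T), and let J be the L × M matrix with entries J(i, j) = exp(−μ_i · t_j). Set A = Φ F J and Ã = Φ D F J. Then the column space of A equals the column space of Ã, i.e., span{y_1, ..., y_M} = span{ỹ_1, ..., ỹ_M}, where y_j and ỹ_j denote the j-th columns of A and Ã respectively. -/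

import Mathlib

set_option autoImplicit false


/-- A nontrivial linear combination of `k` distinct exponentials cannot vanish at
`k` strictly increasing points. -/
lemma exp_comb_eq_zero_strictMono : ∀ (k : ℕ) (a : Fin k → ℝ), Function.Injective a →
    ∀ (c z : Fin k → ℝ), StrictMono z →
    (∀ j, ∑ i, c i * Real.exp (a i * z j) = 0) → ∀ i, c i = 0 := by
  intro k
  induction k with
  | zero => intro a _ c z _ _ i; exact i.elim0
  | succ k IH =>
    intro a ha c z hz h0
    set b : Fin (k+1) → ℝ := fun i => a i - a (Fin.last k) with hb
    set h : ℝ → ℝ := fun x => ∑ i, c i * Real.exp (b i * x) with hh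
    have hderiv : ∀ x, HasDerivAt h (∑ i, c i * b i * Real.exp (b i * x)) x := by
      intro x
      refine HasDerivAt.fun_sum (A := fun i x => c i * Real.exp (b i * x))
        (A' := fun i => c i * b i * Real.exp (b i * x)) fun i _ => ?_
      have h1 : HasDerivAt (fun x : ℝ => b i * x) (b i) x := by
        simpa using (hasDerivAt_id x).const_mul (b i)
      have h2 := (Real.hasDerivAt_exp (b i * x)).comp x h1
      have h3 := h2.const_mul (c i)
      convert h3 using 1
      · rfl
      · rfl
      ring
    have hcont : Continuous h :=
      continuous_iff_continuousAt.mpr fun x => (hderiv x).differentiableAt.continuousAt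
    have hhz : ∀ j, h (z j) = 0 := by
      intro j
      have : h (z j) = (∑ i, c i * Real.exp (a i * z j)) * Real.exp (-(a (Fin.last k) * z j)) := by
        rw [Finset.sum_mul]
        refine Finset.sum_congr rfl fun i _ => ?_
        rw [mul_assoc, ← Real.exp_add, hb]
        ring_nf
      rw [this, h0 j, zero_mul]
    have hR : ∀ j : Fin k, ∃ w ∈ Set.Ioo (z j.castSucc) (z j.succ), deriv h w = 0 := by
      intro j
      exact exists_deriv_eq_zero (hz (Fin.castSucc_lt_succ : j.castSucc < j.succ)) hcont.continuousOn
        (by rw [hhz, hhz])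
    choose w hw1 hw2 using hR
    have hwmono : StrictMono w := by
      intro j1 j2 hj
      have h1 : w j1 < z j1.succ := (hw1 j1).2
      have h2 : z j2.castSucc < w j2 := (hw1 j2).1
      have h3 : z j1.succ ≤ z j2.castSucc := by
        apply hz.monotone
        have := hj
        simp only [Fin.lt_def] at this
        simp only [Fin.le_def, Fin.val_succ, Fin.coe_castSucc]
        omega
      linarith
    have hderiv0 : ∀ j, ∑ i : Fin (k+1), c i * b i * Real.exp (b i * w j) = 0 := by
      intro j
      have := (hderiv (w j)).deriv
      rw [← this]
      exact hw2 j
    have hcs : ∀ i : Fin k, c i.castSucc = 0 := by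
      have hinj : Function.Injective (fun i : Fin k => b i.castSucc) := by
        intro i1 i2 hi
        simp only [hb, sub_left_inj] at hi
        exact Fin.castSucc_injective k (ha hi)
      have hzeros : ∀ j, ∑ i : Fin k,
          (c i.castSucc * b i.castSucc) * Real.exp (b i.castSucc * w j) = 0 := by
        intro j
        have := hderiv0 j
        rw [Fin.sum_univ_castSucc] at this
        have hbl : b (Fin.last k) = 0 := by simp [hb]
        rw [hbl] at this
        simpa using this
      have := IH (fun i => b i.castSucc) hinj
        (fun i => c i.castSucc * b i.castSucc) w hwmono hzeros
      intro i
      have hbne : b i.castSucc ≠ 0 := by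
        simp only [hb, sub_ne_zero]
        exact fun e => (Fin.castSucc_lt_last i).ne (ha e)
      exact (mul_eq_zero.mp (this i)).resolve_right hbne
    have hclast : c (Fin.last k) = 0 := by
      have := h0 (Fin.last k)
      rw [Fin.sum_univ_castSucc] at this
      have : c (Fin.last k) * Real.exp (a (Fin.last k) * z (Fin.last k)) = 0 := by
        rw [show (∑ i : Fin k, c i.castSucc * Real.exp (a i.castSucc * z (Fin.last k))) = 0 from
          Finset.sum_eq_zero fun i _ => by rw [hcs i, zero_mul]] at this
        linarith [this]
      exact (mul_eq_zero.mp this).resolve_right (Real.exp_ne_zero _)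
    intro i
    rcases Fin.eq_castSucc_or_eq_last i with ⟨i', rfl⟩ | rfl
    · exact hcs i'
    · exact hclast

lemma exp_comb_eq_zero (k : ℕ) (a : Fin k → ℝ) (ha : Function.Injective a)
    (c z : Fin k → ℝ) (hzinj : Function.Injective z)
    (h0 : ∀ j, ∑ i, c i * Real.exp (a i * z j) = 0) : ∀ i, c i = 0 := by
  have hcard : (Finset.univ.image z).card = k := by
    rw [Finset.card_image_of_injective _ hzinj, Finset.card_univ, Fintype.card_fin]
  set e := (Finset.univ.image z).orderIsoOfFin hcard with he
  apply exp_comb_eq_zero_strictMono k a ha c (fun j => (e j : ℝ))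
  · intro j1 j2 hj
    exact Subtype.coe_lt_coe.mpr (e.strictMono hj)
  · intro j
    have hmem : (e j : ℝ) ∈ Finset.univ.image z := (e j).2
    obtain ⟨j0, _, hj0⟩ := Finset.mem_image.mp hmem
    rw [← hj0]
    exact h0 j0

lemma span_J_top (L M : ℕ) (hL : 1 ≤ L) (hLM : L ≤ M)
    (μ : Fin L → ℝ) (hμ : Function.Injective μ)
    (t : Fin M → ℝ) (ht : StrictMono t)
    (J : Matrix (Fin L) (Fin M) ℝ) (hJ : ∀ i j, J i j = Real.exp (-μ i * t j)) :
    Submodule.span ℝ (Set.range fun j : Fin M => fun i : Fin L => J i j) = ⊤ := by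
  set u : Fin L → (Fin L → ℝ) := fun j i => J i (Fin.castLE hLM j) with hu
  have hli : LinearIndependent ℝ u := by
    rw [Fintype.linearIndependent_iff]
    intro g hg
    apply exp_comb_eq_zero L (fun j => -(t (Fin.castLE hLM j)))
      (fun j1 j2 hj => Fin.castLE_injective hLM (ht.injective (neg_injective hj)))
      g μ hμ
    intro i
    have := congrFun hg i
    simp only [Finset.sum_apply, Pi.smul_apply, smul_eq_mul, Pi.zero_apply, hu, hJ] at this
    rw [← this]
    refine Finset.sum_congr rfl fun j _ => ?_
    ring_nf
  haveI : Nonempty (Fin L) := ⟨⟨0, hL⟩⟩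
  have hcard : Fintype.card (Fin L) = Module.finrank ℝ (Fin L → ℝ) := by
    simp [Module.finrank_fintype_fun_eq_card]
  have htop : Submodule.span ℝ (Set.range u) = ⊤ := by
    have h := (basisOfLinearIndependentOfCardEqFinrank hli hcard).span_eq
    rwa [coe_basisOfLinearIndependentOfCardEqFinrank] at h
  rw [eq_top_iff, ← htop]
  apply Submodule.span_mono
  rintro _ ⟨j, rfl⟩
  exact ⟨Fin.castLE hLM j, rfl⟩

lemma span_cols_mul (N L M : ℕ) (P : Matrix (Fin N) (Fin L) ℝ) (J : Matrix (Fin L) (Fin M) ℝ)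
    (hJtop : Submodule.span ℝ (Set.range fun j : Fin M => fun i : Fin L => J i j) = ⊤) :
    Submodule.span ℝ (Set.range fun j : Fin M => fun i : Fin N => (P * J) i j)
      = LinearMap.range P.mulVecLin := by
  have hcol : (fun j : Fin M => fun i : Fin N => (P * J) i j)
      = P.mulVecLin ∘ (fun j i => J i j) := by
    funext j i
    simp [Matrix.mulVecLin_apply, Matrix.mulVec, Matrix.mul_apply, dotProduct]
  rw [hcol, Set.range_comp, Submodule.span_image, hJtop, Submodule.map_top,
    LinearMap.range_eq_map]

theorem column_space_eq_backward (N L M : ℕ) (hN : 1 ≤ N) (hL : 1 ≤ L) (hLM : L ≤ M)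
    (μ : Fin L → ℝ) (hμ : Function.Injective μ) (hμpos : ∀ i, 0 < μ i)
    (T : ℝ) (hT : 0 < T) (t : Fin M → ℝ) (ht : StrictMono t) (htpos : ∀ j, 0 < t j)
    (Φ : Matrix (Fin N) (Fin L) ℝ)
    (hΦ : LinearIndependent ℝ (fun j : Fin L => fun i : Fin N => Φ i j))
    (f : Fin L → ℝ) (hf : ∀ i, f i ≠ 0)
    (J : Matrix (Fin L) (Fin M) ℝ) (hJ : ∀ i j, J i j = Real.exp (-μ i * t j))
    (A Atil : Matrix (Fin N) (Fin M) ℝ)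
    (hA : A = Φ * Matrix.diagonal f * J)
    (hAtil : Atil = Φ * Matrix.diagonal (fun i => Real.exp (-μ i * T)) *
      Matrix.diagonal f * J) :
    Submodule.span ℝ (Set.range fun j : Fin M => fun i : Fin N => A i j) =
      Submodule.span ℝ (Set.range fun j : Fin M => fun i : Fin N => Atil i j) := by
  subst hA hAtil
  have hJtop := span_J_top L M hL hLM μ hμ t ht J hJ
  set e : Fin L → ℝ := fun i => Real.exp (-μ i * T) with he
  have hcomm : Φ * Matrix.diagonal e * Matrix.diagonal f
      = Φ * Matrix.diagonal f * Matrix.diagonal e := by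
    rw [Matrix.mul_assoc, Matrix.mul_assoc, Matrix.diagonal_mul_diagonal,
      Matrix.diagonal_mul_diagonal]
    congr 1
    exact congrArg Matrix.diagonal (funext fun i => mul_comm _ _)
  rw [hcomm, span_cols_mul N L M (Φ * Matrix.diagonal f) J hJtop,
    span_cols_mul N L M (Φ * Matrix.diagonal f * Matrix.diagonal e) J hJtop]
  have hsurj : Function.Surjective (Matrix.diagonal e).mulVecLin := by
    intro y
    refine ⟨fun i => y i / e i, ?_⟩
    funext i
    have hene : e i ≠ 0 := Real.exp_ne_zero _
    simp only [Matrix.mulVecLin_apply, Matrix.mulVec_diagonal]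
    field_simp
  rw [Matrix.mulVecLin_mul (Φ * Matrix.diagonal f) (Matrix.diagonal e),
    LinearMap.range_comp, LinearMap.range_eq_top.mpr hsurj, Submodule.map_top]
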